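/- Let F_n be free on a_1,...,a_n and let σ_n ∈ Aut(F_n) be the involution sending each a_i to a_i^{-1}. There is an isomorphism from Aut(∗_{i=0}^n Z_2, x_0) — the subgroup of automorphisms of the free product of n+1 copies of Z_2 fixing the generator x_0 of the first factor — onto the centralizer C_{Aut(F_n)}(σ_n), obtained by restricting automorphisms to the characteristic index-2 subgroup freely generated by a_i = x_0 x_i. -/

import Mathlib

/-- The cyclic group of order 2, written multiplicatively. -/
abbrev Z2 : Type := Multiplicative (ZMod 2)

/-- `G = ∗_{i=0}^{n} ℤ₂`, the free product of `n+1` copies of `ℤ₂`. -/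
abbrev Gp (n : ℕ) : Type := Monoid.CoprodI (fun _ : Fin (n + 1) => Z2)

/-- The generator `xᵢ` of the `i`-th free factor of `Gp n`. -/
def xg (n : ℕ) (i : Fin (n + 1)) : Gp n :=
  Monoid.CoprodI.of (M := fun _ : Fin (n + 1) => Z2) (i := i) (Multiplicative.ofAdd 1)

/-- The embedding of the free group `F_n` onto the even-length (characteristic, index 2)
subgroup of `Gp n`, sending the `i`-th generator to `aᵢ = x₀ xᵢ`. -/
def psi (n : ℕ) : FreeGroup (Fin n) →* Gp n :=
  FreeGroup.lift (fun i : Fin n => xg n 0 * xg n i.succ)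


open Multiplicative FreeGroup SemidirectProduct Monoid

open List in

theorem freeGroup_sq {α : Type*} [DecidableEq α] (w : FreeGroup α) (h : w * w = 1) : w = 1 := by
  have hinv : w = w⁻¹ := by rwa [eq_inv_iff_mul_eq_one]
  by_contra hw
  set L := w.toWord with hLdef
  have hLred : reduce L = L := w.reduce_toWord
  have hLne : L ≠ [] := fun hn => hw (toWord_eq_nil_iff.mp hn)
  have hLinv : L = invRev L := by
    rw [hLdef]
    conv_lhs => rw [hinv]
    rw [toWord_inv]
  set m := L.length with hm
  have hmpos : 0 < m := List.length_pos_iff.mpr hLne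
  have hentry : ∀ i, i < m →
      L[i]? = Option.map (fun p : α × Bool => (p.1, !p.2)) L[m-1-i]? := by
    intro i hi
    conv_lhs => rw [hLinv]
    rw [invRev, List.getElem?_reverse (by simpa [invRev, hm] using hi), List.getElem?_map]
    congr 2
    simp [hm]
  have hmeven : m % 2 = 0 := by
    by_contra hodd
    set k := m / 2 with hk
    have hkm : m - 1 - k = k := by omega
    have h1 := hentry k (by omega)
    rw [hkm] at h1
    have h2 : L[k]? = some (L[k]'(by omega)) := List.getElem?_eq_getElem _
    rw [h2] at h1
    simp only [Option.map_some] at h1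
    have := congrArg (fun o => (Option.map Prod.snd o)) h1
    simp at this
  set k := m / 2 with hk
  have hk1 : k - 1 < m := by omega
  have hk2 : k < m := by omega
  have hkpos : 1 ≤ k := by omega
  set p := L[k]'hk2 with hp
  set q := L[k-1]'hk1 with hqdef
  have hq : q = (p.1, !p.2) := by
    have h1 := hentry (k-1) (by omega)
    rw [show m - 1 - (k-1) = k by omega] at h1
    rw [List.getElem?_eq_getElem hk1, List.getElem?_eq_getElem hk2] at h1
    simpa using h1
  have hsplit : L = L.take (k-1) ++ q :: p :: L.drop (k+1) := by
    conv_lhs => rw [← List.take_append_drop (k-1) L]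
    congr 1
    rw [List.drop_eq_getElem_cons hk1, ← hqdef]
    congr 1
    rw [show k - 1 + 1 = k by omega, List.drop_eq_getElem_cons hk2, ← hp]
  have hstep : Red.Step L (L.take (k-1) ++ L.drop (k+1)) := by
    conv_lhs => rw [hsplit, hq, show p = (p.1, p.2) from rfl]
    exact Red.Step.not_rev
  have heq : reduce L = reduce (L.take (k-1) ++ L.drop (k+1)) := reduce.Step.eq hstep
  have hlen : (reduce (L.take (k-1) ++ L.drop (k+1))).length ≤ (L.take (k-1) ++ L.drop (k+1)).length :=
    Red.length_le reduce.red
  rw [hLred] at heq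
  have hle : m ≤ (L.take (k-1) ++ L.drop (k+1)).length := by
    rw [hm]
    conv_lhs => rw [heq]
    exact hlen
  rw [List.length_append, List.length_take, List.length_drop, ← hm] at hle
  omega

-- ### Z2 helpers
def z2gen : Z2 := Multiplicative.ofAdd 1

lemma z2cases (z : Z2) : z = 1 ∨ z = z2gen := by
  revert z; decide

lemma z2gen_mul : z2gen * z2gen = (1 : Z2) := by decide

/-- Hom out of `Z2` from a square-one element. -/
def z2hom {M : Type*} [Monoid M] (m : M) (hm : m * m = 1) : Z2 →* M where
  toFun z := if z = 1 then 1 else m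
  map_one' := by simp
  map_mul' := by
    intro x y
    rcases z2cases x with hx | hx <;> rcases z2cases y with hy | hy <;>
      subst hx <;> subst hy <;>
      simp [z2gen_mul, hm, show z2gen ≠ (1:Z2) from by decide]

lemma z2hom_gen {M : Type*} [Monoid M] (m : M) (hm : m * m = 1) :
    z2hom m hm z2gen = m := by
  simp [z2hom, show z2gen ≠ (1:Z2) from by decide]

lemma z2hom_ext {M : Type*} [Monoid M] {f g : Z2 →* M}
    (h : f z2gen = g z2gen) : f = g := by
  refine MonoidHom.ext fun z => ?_
  rcases z2cases z with hz | hz <;> subst hz <;> simp [h]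

-- ### the canonical involution of the free group
variable {n : ℕ}

def sHom (n : ℕ) : FreeGroup (Fin n) →* FreeGroup (Fin n) :=
  FreeGroup.lift (fun i => (FreeGroup.of i)⁻¹)

lemma sHom_comp : (sHom n).comp (sHom n) = MonoidHom.id _ := by
  ext i
  simp [sHom]

def sigma0 (n : ℕ) : MulAut (FreeGroup (Fin n)) :=
  MonoidHom.toMulEquiv (sHom n) (sHom n) sHom_comp sHom_comp

lemma sigma0_apply (w : FreeGroup (Fin n)) : sigma0 n w = sHom n w := rfl

lemma sigma0_sq : sigma0 n * sigma0 n = 1 := by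
  ext w
  have := DFunLike.congr_fun sHom_comp w
  simpa [sigma0_apply] using this

/-- the action of Z2 on the free group by the involution -/
def tau (n : ℕ) : Z2 →* MulAut (FreeGroup (Fin n)) := z2hom (sigma0 n) sigma0_sq

lemma tau_gen : tau n z2gen = sigma0 n := z2hom_gen _ _

/-- the semidirect product `F_n ⋊ Z2` -/
abbrev Hsd (n : ℕ) : Type := SemidirectProduct (FreeGroup (Fin n)) Z2 (tau n)

lemma xg_sq (i : Fin (n+1)) : xg n i * xg n i = 1 := by
  rw [xg, ← MonoidHom.map_mul]
  have : (Multiplicative.ofAdd (1 : ZMod 2)) * (Multiplicative.ofAdd 1) = 1 := by decide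
  rw [this, MonoidHom.map_one]

lemma psi_of (i : Fin n) : psi n (FreeGroup.of i) = xg n 0 * xg n i.succ := by
  simp [psi]

/-- the left parts of the images of the `xᵢ` in the semidirect product -/
def bfun (n : ℕ) : Fin (n+1) → FreeGroup (Fin n) :=
  Fin.cases 1 (fun j => (FreeGroup.of j)⁻¹)

lemma bfun_sq (i : Fin (n+1)) :
    (⟨bfun n i, z2gen⟩ : Hsd n) * ⟨bfun n i, z2gen⟩ = 1 := by
  have h1 : (⟨bfun n i, z2gen⟩ : Hsd n) * ⟨bfun n i, z2gen⟩ =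
      ⟨bfun n i * (tau n z2gen) (bfun n i), z2gen * z2gen⟩ := rfl
  rw [h1, tau_gen, z2gen_mul]
  have h2 : bfun n i * (sigma0 n) (bfun n i) = 1 := by
    induction i using Fin.cases with
    | zero => simp [bfun]
    | succ j => simp [bfun, sigma0_apply, sHom]
  rw [h2]
  rfl

/-- `χ : G → F ⋊ Z2` -/
def chi (n : ℕ) : Gp n →* Hsd n :=
  Monoid.CoprodI.lift (fun i => z2hom (⟨bfun n i, z2gen⟩ : Hsd n) (bfun_sq i))

lemma chi_xg (i : Fin (n+1)) : chi n (xg n i) = ⟨bfun n i, z2gen⟩ := by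
  rw [chi, xg, Monoid.CoprodI.lift_of]
  exact z2hom_gen _ _

lemma psi_sigma0 : (psi n).comp (sHom n) =
    ((MulAut.conj (xg n 0)).toMonoidHom : Gp n →* Gp n).comp (psi n) := by
  ext i
  simp only [MonoidHom.comp_apply, sHom, FreeGroup.lift_apply_of,
    MulEquiv.coe_toMonoidHom, MulAut.conj_apply]
  rw [show (psi n) ((FreeGroup.of i)⁻¹) = ((psi n) (FreeGroup.of i))⁻¹ from map_inv _ _,
    psi_of, mul_inv_rev, inv_eq_of_mul_eq_one_right (xg_sq i.succ),
    inv_eq_of_mul_eq_one_right (xg_sq 0), ← mul_assoc (xg n 0) (xg n 0), xg_sq 0, one_mul]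

/-- `θ : F ⋊ Z2 → G` -/
def theta (n : ℕ) : Hsd n →* Gp n :=
  SemidirectProduct.lift (psi n) (z2hom (xg n 0) (xg_sq 0)) (by
    intro g
    rcases z2cases g with hg | hg <;> subst hg
    · ext w
      simp
    · rw [tau_gen, z2hom_gen]
      exact psi_sigma0)

lemma theta_mk (w : FreeGroup (Fin n)) (g : Z2) :
    theta n ⟨w, g⟩ = psi n w * z2hom (xg n 0) (xg_sq 0) g := by
  rw [mk_eq_inl_mul_inr, _root_.map_mul (theta n), theta, lift_inl, lift_inr]

lemma theta_chi : (theta n).comp (chi n) = MonoidHom.id (Gp n) := by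
  apply Monoid.CoprodI.ext_hom
  intro i
  apply z2hom_ext (M := Gp n)
  have hof : (CoprodI.of (M := fun _ : Fin (n+1) => Z2) (i := i)) z2gen = xg n i := rfl
  simp only [MonoidHom.comp_apply, MonoidHom.id_apply, hof, chi_xg]
  rw [theta_mk, z2hom_gen]
  induction i using Fin.cases with
  | zero => simp [bfun]
  | succ j =>
      rw [show bfun n j.succ = (FreeGroup.of j)⁻¹ by simp [bfun]]
      rw [show (psi n) ((FreeGroup.of j)⁻¹) = ((psi n) (FreeGroup.of j))⁻¹ from
        _root_.map_inv _ _,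
        psi_of, mul_inv_rev, inv_eq_of_mul_eq_one_right (xg_sq j.succ),
        inv_eq_of_mul_eq_one_right (xg_sq 0), mul_assoc, xg_sq 0, mul_one]

lemma chi_psi_of (j : Fin n) : chi n (psi n (FreeGroup.of j)) = inl (FreeGroup.of j) := by
  rw [psi_of, _root_.map_mul (chi n) (xg n 0), chi_xg, chi_xg]
  have : ((⟨bfun n 0, z2gen⟩ : Hsd n) * ⟨bfun n j.succ, z2gen⟩ : Hsd n) =
      ⟨bfun n 0 * (tau n z2gen) (bfun n j.succ), z2gen * z2gen⟩ := rfl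
  rw [this, tau_gen, z2gen_mul]
  have h1 : bfun n (0 : Fin (n+1)) = 1 := rfl
  have h2 : bfun n j.succ = (FreeGroup.of j)⁻¹ := by simp [bfun]
  rw [h1, h2, one_mul, _root_.map_inv (sigma0 n), sigma0_apply]
  have : sHom n (FreeGroup.of j) = (FreeGroup.of j)⁻¹ := by simp [sHom]
  rw [this, inv_inv]
  rfl

lemma chi_comp_psi : (chi n).comp (psi n) = (inl : _ →* Hsd n) := by
  apply FreeGroup.ext_hom
  intro j
  exact chi_psi_of j

lemma chi_theta : (chi n).comp (theta n) = MonoidHom.id (Hsd n) := by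
  apply SemidirectProduct.hom_ext
  · calc ((chi n).comp (theta n)).comp inl
        = (chi n).comp ((theta n).comp inl) := by rw [MonoidHom.comp_assoc]
      _ = (chi n).comp (psi n) := by rw [theta, lift_comp_inl]
      _ = inl := chi_comp_psi
      _ = (MonoidHom.id _).comp inl := by rw [MonoidHom.id_comp]
  · apply z2hom_ext
    simp only [MonoidHom.comp_apply, MonoidHom.id_apply]
    simp only [theta, lift_inr, z2hom_gen, chi_xg]
    rfl

/-- the isomorphism `G ≃ F ⋊ Z2` -/
def eIso (n : ℕ) : Gp n ≃* Hsd n :=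
  MonoidHom.toMulEquiv (chi n) (theta n) theta_chi chi_theta

lemma psi_injective : Function.Injective (psi n) := by
  intro a b hab
  have := congrArg (chi n) hab
  have ha := DFunLike.congr_fun (chi_comp_psi (n := n)) a
  have hb := DFunLike.congr_fun (chi_comp_psi (n := n)) b
  simp only [MonoidHom.comp_apply] at ha hb
  rw [ha, hb] at this
  exact inl_injective this

/-- the parity homomorphism -/
def eps (n : ℕ) : Gp n →* Z2 := (rightHom).comp (chi n)

lemma eps_psi (w : FreeGroup (Fin n)) : eps n (psi n w) = 1 := by
  have := DFunLike.congr_fun (chi_comp_psi (n := n)) w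
  simp only [MonoidHom.comp_apply] at this
  simp [eps, this]

lemma mem_range_psi {g : Gp n} (h : eps n g = 1) : ∃ w, psi n w = g := by
  have h2 : rightHom (chi n g) = 1 := h
  have h3 : chi n g = inl ((chi n g).left) := by
    have hr : (chi n g).right = 1 := h2
    conv_lhs => rw [← inl_left_mul_inr_right (chi n g)]
    rw [hr, _root_.map_one, mul_one]
  refine ⟨(chi n g).left, ?_⟩
  have := congrArg (theta n) h3
  have h4 := DFunLike.congr_fun (theta_chi (n := n)) g
  simp only [MonoidHom.comp_apply, MonoidHom.id_apply] at h4
  rw [h4] at this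
  have h5 : theta n (inl ((chi n g).left)) = psi n ((chi n g).left) := by
    rw [← MonoidHom.comp_apply, theta, lift_comp_inl]
  rw [← h5]
  exact this.symm

lemma xg_ne_one (i : Fin (n+1)) : xg n i ≠ 1 := by
  intro h
  have := congrArg (chi n) h
  rw [chi_xg, _root_.map_one] at this
  have : z2gen = (1 : Z2) := congrArg SemidirectProduct.right this
  exact absurd this (by decide)

lemma eps_xg (i : Fin (n+1)) : eps n (xg n i) = z2gen := by
  simp [eps, chi_xg]

/-- the key rigidity: every automorphism preserves parity -/
lemma eps_comp_aut (φ : MulAut (Gp n)) : (eps n).comp φ.toMonoidHom = eps n := by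
  apply Monoid.CoprodI.ext_hom
  intro i
  apply z2hom_ext
  have hof : (CoprodI.of (M := fun _ : Fin (n+1) => Z2) (i := i)) z2gen = xg n i := rfl
  simp only [MonoidHom.comp_apply, MulEquiv.coe_toMonoidHom, hof, eps_xg]
  rcases z2cases (eps n (φ (xg n i))) with hz | hz
  · exfalso
    obtain ⟨w, hw⟩ := mem_range_psi hz
    have hw2 : psi n (w * w) = 1 := by
      rw [_root_.map_mul, hw, ← _root_.map_mul φ, xg_sq i, _root_.map_one]
    have : w * w = 1 := by
      exact psi_injective (n := n)
        (show psi n (w * w) = psi n 1 by rw [hw2]; exact (_root_.map_one _).symm)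
    have hw1 : w = 1 := freeGroup_sq w this
    rw [hw1, _root_.map_one] at hw
    exact xg_ne_one i (φ.injective (by rw [← hw, _root_.map_one]))
  · exact hz

lemma eps_aut_psi (φ : MulAut (Gp n)) (w : FreeGroup (Fin n)) :
    eps n (φ (psi n w)) = 1 := by
  have h1 := DFunLike.congr_fun (eps_comp_aut φ) (psi n w)
  simp only [MonoidHom.comp_apply, MulEquiv.coe_toMonoidHom] at h1
  rw [h1, eps_psi]

/-- restriction of an automorphism of `G` to the free subgroup, along `ψ` -/
noncomputable def restr (φ : MulAut (Gp n)) : FreeGroup (Fin n) →* FreeGroup (Fin n) :=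
  FreeGroup.lift (fun i => Classical.choose (mem_range_psi (eps_aut_psi φ (FreeGroup.of i))))

lemma psi_restr (φ : MulAut (Gp n)) (w : FreeGroup (Fin n)) :
    psi n (restr φ w) = φ (psi n w) := by
  have : (psi n).comp (restr φ) = (φ.toMonoidHom).comp (psi n) := by
    apply FreeGroup.ext_hom
    intro i
    simp only [MonoidHom.comp_apply, MulEquiv.coe_toMonoidHom, restr, FreeGroup.lift_apply_of]
    exact Classical.choose_spec (mem_range_psi (eps_aut_psi φ (FreeGroup.of i)))
  have := DFunLike.congr_fun this w
  simpa using this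

lemma restr_mul (φ φ' : MulAut (Gp n)) (w : FreeGroup (Fin n)) :
    restr (φ * φ') w = restr φ (restr φ' w) := by
  apply psi_injective (n := n)
  rw [psi_restr, psi_restr, psi_restr]
  rfl

lemma restr_one (w : FreeGroup (Fin n)) : restr (1 : MulAut (Gp n)) w = w := by
  apply psi_injective (n := n)
  rw [psi_restr]
  rfl

/-- the restriction as an automorphism of the free group -/
noncomputable def restrEquiv (φ : MulAut (Gp n)) : MulAut (FreeGroup (Fin n)) :=
  MonoidHom.toMulEquiv (restr φ) (restr φ⁻¹)
    (by ext w
        simp only [MonoidHom.comp_apply, MonoidHom.id_apply]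
        rw [← restr_mul, inv_mul_cancel, restr_one])
    (by ext w
        simp only [MonoidHom.comp_apply, MonoidHom.id_apply]
        rw [← restr_mul, mul_inv_cancel, restr_one])

lemma restrEquiv_apply (φ : MulAut (Gp n)) (w : FreeGroup (Fin n)) :
    restrEquiv φ w = restr φ w := rfl

lemma restr_comm (φ : MulAut (Gp n)) (hφ : φ (xg n 0) = xg n 0)
    (w : FreeGroup (Fin n)) : restr φ (sigma0 n w) = sigma0 n (restr φ w) := by
  apply psi_injective (n := n)
  have hps : ∀ v : FreeGroup (Fin n),
      psi n (sigma0 n v) = xg n 0 * psi n v * (xg n 0)⁻¹ := by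
    intro v
    have := DFunLike.congr_fun (psi_sigma0 (n := n)) v
    simpa [sigma0_apply] using this
  rw [psi_restr, hps, hps, psi_restr]
  rw [_root_.map_mul, _root_.map_mul, _root_.map_inv, hφ]

lemma chi_psi (w : FreeGroup (Fin n)) : chi n (psi n w) = inl w := by
  have := DFunLike.congr_fun (chi_comp_psi (n := n)) w
  simpa using this

lemma theta_inl (w : FreeGroup (Fin n)) : theta n (inl w) = psi n w := by
  rw [← MonoidHom.comp_apply, theta, lift_comp_inl]

section reverse
variable (α : MulAut (FreeGroup (Fin n)))
  (hc : ∀ w, α (sigma0 n w) = sigma0 n (α w))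

/-- lift of an automorphism of `F` commuting with the involution, to `F ⋊ Z2` -/
def lifted : Hsd n →* Hsd n :=
  SemidirectProduct.lift (inl.comp α.toMonoidHom) inr (by
    intro g
    rcases z2cases g with hg | hg <;> subst hg
    · refine MonoidHom.ext fun w => ?_
      simp
    · rw [tau_gen]
      refine MonoidHom.ext fun w => ?_
      simp only [MonoidHom.comp_apply, MulEquiv.coe_toMonoidHom, MulAut.conj_apply]
      rw [← _root_.map_inv inr, ← inl_aut, tau_gen]
      exact congrArg inl (hc w))

lemma lifted_mk (w : FreeGroup (Fin n)) (g : Z2) :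
    lifted α hc ⟨w, g⟩ = ⟨α w, g⟩ := by
  rw [mk_eq_inl_mul_inr, _root_.map_mul, lifted, lift_inl, lift_inr,
    MonoidHom.comp_apply, MulEquiv.coe_toMonoidHom, ← mk_eq_inl_mul_inr]

/-- the corresponding endomorphism of `G` -/
def gphi : Gp n →* Gp n :=
  (theta n).comp ((lifted α hc).comp (chi n))

lemma gphi_psi (w : FreeGroup (Fin n)) : gphi α hc (psi n w) = psi n (α w) := by
  rw [gphi, MonoidHom.comp_apply, MonoidHom.comp_apply, chi_psi]
  have : (inl w : Hsd n) = ⟨w, 1⟩ := by ext <;> simp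
  rw [this, lifted_mk]
  have : (⟨α w, 1⟩ : Hsd n) = inl (α w) := by ext <;> simp
  rw [this, theta_inl]

lemma gphi_x0 : gphi α hc (xg n 0) = xg n 0 := by
  rw [gphi, MonoidHom.comp_apply, MonoidHom.comp_apply, chi_xg]
  have hb : bfun n (0 : Fin (n+1)) = 1 := rfl
  rw [hb, lifted_mk, _root_.map_one]
  have : (⟨(1 : FreeGroup (Fin n)), z2gen⟩ : Hsd n) = inr z2gen := by ext <;> simp
  rw [this, theta, lift_inr, z2hom_gen]

end reverse

lemma gphi_comp (α β : MulAut (FreeGroup (Fin n)))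
    (hcα : ∀ w, α (sigma0 n w) = sigma0 n (α w))
    (hcβ : ∀ w, β (sigma0 n w) = sigma0 n (β w))
    (g : Gp n) : gphi α hcα (gphi β hcβ g) = gphi (α * β) (fun w => by
      simp only [MulAut.mul_apply, hcβ, hcα]) g := by
  simp only [gphi, MonoidHom.comp_apply]
  have hct : chi n (theta n (lifted β hcβ (chi n g))) = lifted β hcβ (chi n g) := by
    have := DFunLike.congr_fun (chi_theta (n := n)) (lifted β hcβ (chi n g))
    simpa using this
  rw [hct]
  congr 1
  obtain ⟨w, z⟩ := chi n g
  rw [lifted_mk, lifted_mk]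
  erw [lifted_mk]
  rfl

lemma gphi_one (g : Gp n) :
    gphi (1 : MulAut (FreeGroup (Fin n))) (fun w => by simp) g = g := by
  simp only [gphi, MonoidHom.comp_apply]
  have : lifted (1 : MulAut (FreeGroup (Fin n))) (fun w => by simp) (chi n g) = chi n g := by
    obtain ⟨w, z⟩ := chi n g
    erw [lifted_mk]
    rfl
  rw [this]
  have := DFunLike.congr_fun (theta_chi (n := n)) g
  simpa using this

lemma psi_bfun_x0 (i : Fin (n+1)) : psi n (bfun n i) * xg n 0 = xg n i := by
  induction i using Fin.cases with
  | zero => simp [bfun]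
  | succ j =>
      rw [show bfun n j.succ = (FreeGroup.of j)⁻¹ by simp [bfun]]
      rw [show (psi n) ((FreeGroup.of j)⁻¹) = ((psi n) (FreeGroup.of j))⁻¹ from
        _root_.map_inv _ _,
        psi_of, mul_inv_rev, inv_eq_of_mul_eq_one_right (xg_sq j.succ),
        inv_eq_of_mul_eq_one_right (xg_sq 0), mul_assoc, xg_sq 0, mul_one]

lemma hc_inv (α : MulAut (FreeGroup (Fin n)))
    (hc : ∀ w, α (sigma0 n w) = sigma0 n (α w)) :
    ∀ w, α⁻¹ (sigma0 n w) = sigma0 n (α⁻¹ w) := by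
  intro w
  apply α.injective
  rw [MulAut.apply_inv_self, hc, MulAut.apply_inv_self]

lemma gphi_congr (β γ : MulAut (FreeGroup (Fin n))) (hβ : ∀ w, β (sigma0 n w) = sigma0 n (β w))
    (hγ : ∀ w, γ (sigma0 n w) = sigma0 n (γ w)) (h : β = γ) (g : Gp n) :
    gphi β hβ g = gphi γ hγ g := by subst h; rfl

/-- the automorphism of `G` induced by a palindromic automorphism of `F` -/
def autG (α : MulAut (FreeGroup (Fin n)))
    (hc : ∀ w, α (sigma0 n w) = sigma0 n (α w)) : MulAut (Gp n) where
  toFun := gphi α hc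
  invFun := gphi α⁻¹ (hc_inv α hc)
  left_inv g := by
    erw [gphi_comp, gphi_congr (α⁻¹ * α) 1 _ (fun w => by simp) (inv_mul_cancel α), gphi_one]
  right_inv g := by
    erw [gphi_comp, gphi_congr (α * α⁻¹) 1 _ (fun w => by simp) (mul_inv_cancel α), gphi_one]
  map_mul' := (gphi α hc).map_mul

lemma autG_apply (α : MulAut (FreeGroup (Fin n))) (hc : ∀ w, α (sigma0 n w) = sigma0 n (α w))
    (g : Gp n) : autG α hc g = gphi α hc g := rfl


/-- `Aut(∗_{i=0}^n ℤ₂, x₀)`, the subgroup of automorphisms of the free product fixing the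
generator `x₀` of the first factor, is isomorphic to the centralizer in `Aut(F_n)` of the
involution `σₙ : aᵢ ↦ aᵢ⁻¹`, via restriction to the characteristic index-2 subgroup
freely generated by the `aᵢ = x₀ xᵢ` (i.e. along the embedding `ψ`). -/
theorem aut_fixing_x0_iso_centralizer (n : ℕ)
    (σ : MulAut (FreeGroup (Fin n)))
    (hσ : ∀ i : Fin n, σ (FreeGroup.of i) = (FreeGroup.of i)⁻¹) :
    ∃ Φ : MulAction.stabilizer (MulAut (Gp n)) (xg n 0) ≃*
        Subgroup.centralizer ({σ} : Set (MulAut (FreeGroup (Fin n)))),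
      ∀ (φ : MulAction.stabilizer (MulAut (Gp n)) (xg n 0)) (w : FreeGroup (Fin n)),
        psi n (((Φ φ : MulAut (FreeGroup (Fin n)))) w) = (φ : MulAut (Gp n)) (psi n w) := by
  have hσ0 : σ = sigma0 n := by
    have h1 : σ.toMonoidHom = (sigma0 n).toMonoidHom := by
      apply FreeGroup.ext_hom
      intro i
      simp only [MulEquiv.coe_toMonoidHom]
      rw [hσ i, sigma0_apply]
      simp [sHom]
    refine DFunLike.ext _ _ fun w => ?_
    exact DFunLike.congr_fun h1 w
  subst hσ0
  have hstab : ∀ φ : MulAut (Gp n),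
      φ ∈ MulAction.stabilizer (MulAut (Gp n)) (xg n 0) ↔ φ (xg n 0) = xg n 0 := by
    intro φ
    rw [MulAction.mem_stabilizer_iff]
    rfl
  have hcent : ∀ α : MulAut (FreeGroup (Fin n)),
      α ∈ Subgroup.centralizer ({sigma0 n} : Set (MulAut (FreeGroup (Fin n)))) ↔
        ∀ w, α (sigma0 n w) = sigma0 n (α w) := by
    intro α
    rw [Subgroup.mem_centralizer_iff]
    constructor
    · intro h w
      have h2 := h (sigma0 n) rfl
      have := DFunLike.congr_fun h2 w
      simpa [MulAut.mul_apply] using this.symm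
    · intro h s hs
      rw [Set.mem_singleton_iff] at hs
      subst hs
      refine DFunLike.ext _ _ fun w => ?_
      simpa [MulAut.mul_apply] using (h w).symm
  refine ⟨{
    toFun := fun φ => ⟨restrEquiv φ.1, (hcent _).mpr fun w =>
      restr_comm φ.1 ((hstab φ.1).mp φ.2) w⟩
    invFun := fun α => ⟨autG α.1 ((hcent _).mp α.2), (hstab _).mpr (gphi_x0 _ _)⟩
    left_inv := ?_
    right_inv := ?_
    map_mul' := ?_ }, ?_⟩
  · -- left_inv
    rintro ⟨φ, hφ⟩
    apply Subtype.ext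
    simp only
    have key : (gphi (restrEquiv φ) ((hcent _).mp ((hcent _).mpr fun w =>
        restr_comm φ ((hstab φ).mp hφ) w))) = φ.toMonoidHom := by
      apply Monoid.CoprodI.ext_hom
      intro i
      apply z2hom_ext
      have hof : (CoprodI.of (M := fun _ : Fin (n+1) => Z2) (i := i)) z2gen = xg n i := rfl
      simp only [MonoidHom.comp_apply, MulEquiv.coe_toMonoidHom, hof]
      rw [← psi_bfun_x0 i, _root_.map_mul, _root_.map_mul, gphi_psi, gphi_x0,
        restrEquiv_apply, psi_restr, (hstab φ).mp hφ]
    refine DFunLike.ext _ _ fun g => ?_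
    have := DFunLike.congr_fun key g
    simpa [autG_apply] using this
  · -- right_inv
    rintro ⟨α, hα⟩
    apply Subtype.ext
    refine DFunLike.ext _ _ fun w => ?_
    simp only
    apply psi_injective (n := n)
    rw [restrEquiv_apply, psi_restr, autG_apply, gphi_psi]
  · -- map_mul
    rintro ⟨φ, hφ⟩ ⟨φ', hφ'⟩
    apply Subtype.ext
    refine DFunLike.ext _ _ fun w => ?_
    simp only [Subgroup.coe_mul, MulAut.mul_apply]
    rw [restrEquiv_apply, restrEquiv_apply, restrEquiv_apply]
    exact restr_mul φ φ' w
  · -- the defining property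
    rintro ⟨φ, hφ⟩ w
    show psi n ((restrEquiv φ) w) = φ (psi n w)
    rw [restrEquiv_apply, psi_restr]
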